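/- Let Γ be the graph with 22 vertices γ₀,…,γ₈, δ₀,…,δ₈, ρ, ε₀, ε₁, ε₂ and edges γ₁–γ₃, γ₃–γ₄, γ₄–γ₅, γ₅–γ₆, γ₆–γ₇, γ₇–γ₈, γ₈–γ₀, γ₄–γ₂, δ₁–δ₃, δ₃–δ₄, δ₄–δ₅, δ₅–δ₆, δ₆–δ₇, δ₇–δ₈, δ₈–δ₀, δ₄–δ₂, γ₀–ρ, δ₀–ρ, ρ–ε₀, ε₀–ε₁, ε₁–ε₂. Let A be its 22×22 adjacency matrix and N = A − 2·I. Then: (1) the kernel of N acting on ℚ²² is one-dimensional, spanned by the vector a − b, where a = 2γ₁+3γ₂+4γ₃+6γ₄+5γ₅+4γ₆+3γ₇+2γ₈+γ₀ and b = 2δ₁+3δ₂+4δ₃+6δ₄+5δ₅+4δ₆+3δ₇+2δ₈+δ₀ (written in the standard basis indexed by the vertices); (2) there exists an invertible real 22×22 matrix P such that Pᵀ·N·P is the diagonal matrix with exactly one diagonal entry equal to 1, twenty diagonal entries equal to −1, and one diagonal entry equal to 0 (i.e., the real quadratic form x ↦ xᵀNx has signature (1,20,1)). -/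

import Mathlib

open Matrix

namespace Stmt0

set_option maxRecDepth 8000

/-- The edges of the graph `Γ`, with vertices indexed as:
`γᵢ ↦ i` (for `i = 0, …, 8`), `δᵢ ↦ 9 + i` (for `i = 0, …, 8`),
`ρ ↦ 18`, `ε₀ ↦ 19`, `ε₁ ↦ 20`, `ε₂ ↦ 21`. -/
def edges : List (Fin 22 × Fin 22) :=
  [(1, 3), (3, 4), (4, 5), (5, 6), (6, 7), (7, 8), (8, 0), (4, 2),
   (10, 12), (12, 13), (13, 14), (14, 15), (15, 16), (16, 17), (17, 9), (13, 11),
   (0, 18), (9, 18), (18, 19), (19, 20), (20, 21)]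

/-- The adjacency matrix of the graph `Γ`. -/
def adj (R : Type*) [Zero R] [One R] : Matrix (Fin 22) (Fin 22) R :=
  Matrix.of fun i j => if (i, j) ∈ edges ∨ (j, i) ∈ edges then 1 else 0

/-- The Gram matrix `N = A − 2·I`. -/
def N (R : Type*) [Ring R] : Matrix (Fin 22) (Fin 22) R :=
  adj R - 2 • (1 : Matrix (Fin 22) (Fin 22) R)

/-- The vector `a = 2γ₁+3γ₂+4γ₃+6γ₄+5γ₅+4γ₆+3γ₇+2γ₈+γ₀`. -/
def a : Fin 22 → ℚ :=
  ![1, 2, 3, 4, 6, 5, 4, 3, 2, 0, 0, 0, 0, 0, 0, 0, 0, 0, 0, 0, 0, 0]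

/-- The vector `b = 2δ₁+3δ₂+4δ₃+6δ₄+5δ₅+4δ₆+3δ₇+2δ₈+δ₀`. -/
def b : Fin 22 → ℚ :=
  ![0, 0, 0, 0, 0, 0, 0, 0, 0, 1, 2, 3, 4, 6, 5, 4, 3, 2, 0, 0, 0, 0]

/-! ### Auxiliary data -/

def Q : Matrix (Fin 22) (Fin 22) ℤ := !![2, 0, 0, 0, 0, 0, 0, 0, 0, 0, 0, 0, 0, 0, 0, 0, 0, 0, 0, 0, -5, -1;
  4, 0, 0, 0, 0, 0, 0, 0, 0, 0, 0, 0, 0, 0, 0, 0, 0, 0, 4, 0, -10, -2;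
  6, 0, 0, 0, 0, 0, 0, 0, 0, 0, 0, 0, 0, 0, 7, 0, 0, 0, 5, 0, -15, -3;
  8, 0, 0, 0, 0, 0, 0, 0, 0, 0, 0, 5, 1, 0, 5, 0, 0, 0, 7, 0, -20, -4;
  12, 0, 0, 0, 0, 0, 3, 1, 0, 0, 0, 4, 2, 0, 10, 0, 0, 0, 10, 0, -30, -6;
  10, 0, 0, 0, 2, 0, 2, 2, 0, 0, 0, 3, 3, 0, 8, 0, 0, 0, 8, 0, -25, -5;
  8, 0, 1, 0, 1, 0, 1, 3, 0, 0, 0, 2, 4, 0, 6, 0, 0, 0, 6, 0, -20, -4;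
  6, 0, 0, 0, 0, 0, 0, 4, 0, 0, 0, 1, 5, 0, 4, 0, 0, 0, 4, 0, -15, -3;
  4, 0, 0, 0, 0, 0, 0, 0, 0, 0, 0, 0, 6, 0, 2, 0, 0, 0, 2, 0, -10, -2;
  3, 0, 0, 0, 0, 0, 0, 0, 0, 0, 0, 0, 0, 0, 0, 0, 0, 3, 0, 3, 5, 1;
  0, 0, 0, 0, 0, 0, 0, 0, 0, 0, 0, 0, 0, 0, 0, 1, 3, 0, 0, 0, 4, 2;
  0, 0, 0, 0, 0, 0, 0, 0, 0, 0, 0, 0, 0, 0, 0, 0, 0, 0, 0, 0, 0, 3;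
  0, 0, 0, 0, 0, 0, 0, 0, 0, 0, 0, 0, 0, 0, 0, 0, 6, 0, 0, 0, 8, 4;
  0, 0, 0, 0, 0, 0, 0, 0, 0, 0, 0, 0, 0, 2, 0, 0, 4, 0, 0, 0, 12, 6;
  0, 0, 0, 0, 0, 0, 0, 0, 0, 1, 0, 0, 0, 1, 0, 0, 2, 0, 0, 0, 16, 5;
  0, 0, 0, 0, 0, 0, 0, 0, 0, 0, 0, 0, 0, 0, 0, 0, 0, 0, 0, 0, 20, 4;
  1, 1, 0, 1, 0, 0, 0, 0, 0, 0, 0, 0, 0, 0, 0, 0, 0, 1, 0, 1, 15, 3;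
  2, 0, 0, 2, 0, 0, 0, 0, 0, 0, 0, 0, 0, 0, 0, 0, 0, 2, 0, 2, 10, 2;
  4, 0, 0, 0, 0, 1, 0, 0, 0, 0, 1, 0, 0, 0, 0, 0, 0, 2, 0, 4, 0, 0;
  3, 0, 0, 0, 0, 0, 0, 0, 0, 0, 2, 0, 0, 0, 0, 0, 0, 1, 0, 5, 0, 0;
  2, 0, 0, 0, 0, 0, 0, 0, 0, 0, 0, 0, 0, 0, 0, 0, 0, 0, 0, 6, 0, 0;
  1, 0, 0, 0, 0, 0, 0, 0, 1, 0, 0, 0, 0, 0, 0, 0, 0, 0, 0, 3, 0, 0]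

def M1 : Matrix (Fin 22) (Fin 22) ℤ := !![4, 0, 0, 0, 0, 0, 0, 0, 0, 0, 0, 0, 0, 0, 0, 1, 0, 0, 0, 0, 0, 0;
  0, 0, 0, 0, 0, 0, 0, 0, 0, 0, 0, 0, 0, 0, 0, 1, -2, 1, 0, 0, 0, 0;
  0, 0, 0, 0, 0, 1, -2, 1, 0, 0, 0, 0, 0, 0, 0, 0, 0, 0, 0, 0, 0, 0;
  0, 0, 0, 0, 0, 0, 0, 0, 0, 2, 0, 0, 0, 0, 0, 1, 0, -3, 0, 0, 0, 0;
  0, 0, 0, 0, 2, -3, 0, 1, 0, 0, 0, 0, 0, 0, 0, 0, 0, 0, 0, 0, 0, 0;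
  1, 0, 0, 0, 0, 0, 0, 0, 0, 1, 0, 0, 0, 0, 0, 0, 0, 0, -2, 1, 0, 0;
  0, 0, 3, 3, -4, 0, 0, 1, 0, 0, 0, 0, 0, 0, 0, 0, 0, 0, 0, 0, 0, 0;
  0, 0, 1, 1, 0, 0, 0, -5, 4, 0, 0, 0, 0, 0, 0, 0, 0, 0, 0, 0, 0, 0;
  0, 0, 0, 0, 0, 0, 0, 0, 0, 0, 0, 0, 0, 0, 0, 0, 0, 0, 0, 0, 1, -2;
  0, 0, 0, 0, 0, 0, 0, 0, 0, 0, 0, 0, 0, 1, -2, 1, 0, 0, 0, 0, 0, 0;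
  1, 0, 0, 0, 0, 0, 0, 0, 0, 1, 0, 0, 0, 0, 0, 0, 0, 0, 0, -3, 2, 0;
  0, 5, 4, -6, 0, 0, 0, 0, 1, 0, 0, 0, 0, 0, 0, 0, 0, 0, 0, 0, 0, 0;
  6, 1, 2, 0, 0, 0, 0, 0, -7, 0, 0, 0, 0, 0, 0, 0, 0, 0, 0, 0, 0, 0;
  0, 0, 0, 0, 0, 0, 0, 0, 0, 0, 0, 2, 2, -3, 0, 1, 0, 0, 0, 0, 0, 0;
  2, 5, -4, 0, 0, 0, 0, 0, 0, 0, 0, 0, 0, 0, 0, 0, 0, 0, 0, 0, 0, 0;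
  0, 0, 0, 0, 0, 0, 0, 0, 0, 0, -2, 0, 1, 0, 0, 0, 0, 0, 0, 0, 0, 0;
  0, 0, 0, 0, 0, 0, 0, 0, 0, 0, 0, 4, -5, 0, 0, 2, 0, 0, 0, 0, 0, 0;
  2, 0, 0, 0, 0, 0, 0, 0, 0, -2, 0, 0, 0, 0, 0, 1, 0, 0, 0, 0, 1, 0;
  2, -1, 0, 0, 0, 0, 0, 0, 0, 0, 0, 0, 0, 0, 0, 0, 0, 0, 0, 0, 0, 0;
  4, 0, 0, 0, 0, 0, 0, 0, 0, 0, 0, 0, 0, 0, 0, 1, 0, 0, 0, 0, -4, 0;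
  0, 0, 0, 0, 0, 0, 0, 0, 0, 0, 0, 12, 0, 0, 0, -9, 0, 0, 0, 0, 0, 0;
  0, 0, 0, 0, 0, 0, 0, 0, 0, 0, 0, 0, 0, 0, 0, 0, 0, 0, 0, 0, 0, 0]

def Rm : Matrix (Fin 22) (Fin 22) ℤ := !![420, 0, 0, 0, 0, 0, 0, 0, 0, 0, 0, 0, 0, 0, 0, 105, 0, 0, 0, 0, 0, 0;
  0, 0, 0, 0, 0, 0, 0, 0, 0, 0, 0, 0, 0, 0, 0, -420, 840, -420, 0, 0, 0, 0;
  0, 0, 0, 0, 0, -420, 840, -420, 0, 0, 0, 0, 0, 0, 0, 0, 0, 0, 0, 0, 0, 0;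
  0, 0, 0, 0, 0, 0, 0, 0, 0, -280, 0, 0, 0, 0, 0, -140, 0, 420, 0, 0, 0, 0;
  0, 0, 0, 0, -280, 420, 0, -140, 0, 0, 0, 0, 0, 0, 0, 0, 0, 0, 0, 0, 0, 0;
  -420, 0, 0, 0, 0, 0, 0, 0, 0, -420, 0, 0, 0, 0, 0, 0, 0, 0, 840, -420, 0, 0;
  0, 0, -210, -210, 280, 0, 0, -70, 0, 0, 0, 0, 0, 0, 0, 0, 0, 0, 0, 0, 0, 0;
  0, 0, -42, -42, 0, 0, 0, 210, -168, 0, 0, 0, 0, 0, 0, 0, 0, 0, 0, 0, 0, 0;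
  0, 0, 0, 0, 0, 0, 0, 0, 0, 0, 0, 0, 0, 0, 0, 0, 0, 0, 0, 0, -420, 840;
  0, 0, 0, 0, 0, 0, 0, 0, 0, 0, 0, 0, 0, -420, 840, -420, 0, 0, 0, 0, 0, 0;
  -140, 0, 0, 0, 0, 0, 0, 0, 0, -140, 0, 0, 0, 0, 0, 0, 0, 0, 0, 420, -280, 0;
  0, -140, -112, 168, 0, 0, 0, 0, -28, 0, 0, 0, 0, 0, 0, 0, 0, 0, 0, 0, 0, 0;
  -120, -20, -40, 0, 0, 0, 0, 0, 140, 0, 0, 0, 0, 0, 0, 0, 0, 0, 0, 0, 0, 0;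
  0, 0, 0, 0, 0, 0, 0, 0, 0, 0, 0, -280, -280, 420, 0, -140, 0, 0, 0, 0, 0, 0;
  -60, -150, 120, 0, 0, 0, 0, 0, 0, 0, 0, 0, 0, 0, 0, 0, 0, 0, 0, 0, 0, 0;
  0, 0, 0, 0, 0, 0, 0, 0, 0, 0, 840, 0, -420, 0, 0, 0, 0, 0, 0, 0, 0, 0;
  0, 0, 0, 0, 0, 0, 0, 0, 0, 0, 0, -112, 140, 0, 0, -56, 0, 0, 0, 0, 0, 0;
  -280, 0, 0, 0, 0, 0, 0, 0, 0, 280, 0, 0, 0, 0, 0, -140, 0, 0, 0, 0, -140, 0;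
  -420, 210, 0, 0, 0, 0, 0, 0, 0, 0, 0, 0, 0, 0, 0, 0, 0, 0, 0, 0, 0, 0;
  -140, 0, 0, 0, 0, 0, 0, 0, 0, 0, 0, 0, 0, 0, 0, -35, 0, 0, 0, 0, 140, 0;
  0, 0, 0, 0, 0, 0, 0, 0, 0, 0, 0, -56, 0, 0, 0, 42, 0, 0, 0, 0, 0, 0;
  0, 0, 0, 0, 0, 0, 0, 0, 0, 0, 0, 280, 0, 0, 0, 0, 0, 0, 0, 0, 0, 0]

def d : Fin 22 → ℤ := ![8, -2, -2, -6, -6, -2, -12, -20, -2, -2, -6, -30, -42, -6, -28, -2, -30, -6, -4, -24, -180, 0]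

def q21z : Fin 22 → ℤ := ![-1, -2, -3, -4, -6, -5, -4, -3, -2, 1, 2, 3, 4, 6, 5, 4, 3, 2, 0, 0, 0, 0]

noncomputable def e : Fin 22 → ℝ := fun i => if d i = 0 then 1 else (Real.sqrt |((d i : ℝ))|)⁻¹

/-! ### Integer computations -/

set_option maxRecDepth 100000 in
lemma hM1 : Q.transpose * N ℤ = M1 := by decide +kernel

set_option maxRecDepth 100000 in
lemma hcongZ : M1 * Q = Matrix.diagonal d := by decide +kernel

set_option maxRecDepth 100000 in
lemma hQR : Q * Rm = Matrix.diagonal (fun _ => (840 : ℤ)) := by decide +kernel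

set_option maxRecDepth 100000 in
lemma hq21 : ∀ i : Fin 22, Q i 21 = q21z i := by decide

set_option maxRecDepth 100000 in
lemma hNQcol : ∀ i : Fin 22, (N ℤ * Q) i 21 = 0 := by decide

set_option maxRecDepth 100000 in
lemma hsign : ∀ i : Fin 22, ((0 < d i) ↔ (i = 0)) ∧ ((d i = 0) ↔ (i = 21)) := by decide

/-! ### Transfer to a general ring -/

lemma N_map (R : Type*) [Ring R] : (N ℤ).map ⇑(Int.castRingHom R) = N R := by
  ext i j
  simp only [N, adj, Matrix.map_apply, Matrix.sub_apply, Matrix.smul_apply, Matrix.one_apply,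
    Matrix.of_apply]
  split_ifs <;> simp only [eq_intCast, nsmul_eq_mul, Nat.cast_ofNat] <;> push_cast <;> norm_num

lemma habcol : ∀ i : Fin 22, ((q21z i : ℚ)) = b i - a i := by
  intro i; fin_cases i <;> norm_num [q21z, a, b]

lemma hd840 {R : Type*} [Ring R] (c : R) :
    Matrix.diagonal (fun _ : Fin 22 => c) = c • (1 : Matrix (Fin 22) (Fin 22) R) := by
  ext i j
  by_cases h : i = j <;>
    simp [Matrix.diagonal_apply, h, Matrix.smul_apply, Matrix.one_apply]

section rat

abbrev fQ : ℤ →+* ℚ := Int.castRingHom ℚ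

lemma hcolQ : (Q.map ⇑fQ) *ᵥ Pi.single (21 : Fin 22) (1 : ℚ) = b - a := by
  rw [Matrix.mulVec_single_one]
  funext i
  simp only [Matrix.col_apply, Matrix.map_apply, mul_one, Pi.sub_apply, hq21 i, Int.coe_castRingHom]
  exact habcol i

lemma hQRQ : (Q.map ⇑fQ) * (Rm.map ⇑fQ) = (840 : ℚ) • 1 := by
  have h := congrArg (fun M : Matrix (Fin 22) (Fin 22) ℤ => M.map ⇑fQ) hQR
  rw [Matrix.map_mul, Matrix.diagonal_map (by simp)] at h
  rw [h]
  simpa using hd840 (840 : ℚ)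

lemma hcongQ : (Q.map ⇑fQ).transpose * N ℚ * (Q.map ⇑fQ) =
    Matrix.diagonal (fun i => ((d i : ℚ))) := by
  have h1 : Q.transpose * N ℤ * Q = Matrix.diagonal d := by rw [hM1, hcongZ]
  have h := congrArg (fun M : Matrix (Fin 22) (Fin 22) ℤ => M.map ⇑fQ) h1
  rw [Matrix.map_mul, Matrix.map_mul, Matrix.transpose_map, Matrix.diagonal_map (by simp),
    N_map ℚ] at h
  simpa using h

lemma hNQQ : N ℚ * (Q.map ⇑fQ) = (N ℤ * Q).map ⇑fQ := by
  rw [Matrix.map_mul, N_map ℚ]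

lemma hNab : (N ℚ).mulVec (a - b) = 0 := by
  have h1 : a - b = -((Q.map ⇑fQ) *ᵥ Pi.single (21 : Fin 22) (1 : ℚ)) := by
    rw [hcolQ, neg_sub]
  rw [h1, Matrix.mulVec_neg, Matrix.mulVec_mulVec, hNQQ, Matrix.mulVec_single]
  funext i
  simp [Matrix.map_apply, hNQcol i]

lemma part1 : ∀ v : Fin 22 → ℚ, (N ℚ).mulVec v = 0 ↔ ∃ c : ℚ, v = c • (a - b) := by
  intro v
  constructor
  · intro hv
    set w : Fin 22 → ℚ := (Rm.map ⇑fQ) *ᵥ v with hw_def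
    have hw : Matrix.diagonal (fun i => ((d i : ℚ))) *ᵥ w = 0 := by
      rw [← hcongQ, hw_def, Matrix.mulVec_mulVec, Matrix.mul_assoc ((Q.map ⇑fQ).transpose * N ℚ),
        hQRQ, Matrix.mul_smul, Matrix.mul_one, Matrix.smul_mulVec,
        ← Matrix.mulVec_mulVec, hv, Matrix.mulVec_zero, smul_zero]
    have hw0 : ∀ i : Fin 22, i ≠ 21 → w i = 0 := by
      intro i hi
      have h := congrFun hw i
      rw [Matrix.mulVec_diagonal] at h
      have hd : (d i : ℚ) ≠ 0 := by
        refine Int.cast_ne_zero.mpr fun h0 => hi ((hsign i).2.mp h0)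
      simpa [Pi.zero_apply, hd] using h
    have hwsingle : w = (w 21) • (Pi.single (21 : Fin 22) (1 : ℚ) : Fin 22 → ℚ) := by
      funext i
      by_cases h : i = 21
      · subst h; simp
      · simp [hw0 i h, Pi.single_apply, h]
    have h1 : (840 : ℚ) • v = (Q.map ⇑fQ) *ᵥ w := by
      rw [hw_def, Matrix.mulVec_mulVec, hQRQ, Matrix.smul_mulVec, Matrix.one_mulVec]
    have h840 : (840 : ℚ) • v = (w 21) • (b - a) := by
      rw [h1]
      conv_lhs => rw [hwsingle]
      rw [Matrix.mulVec_smul, hcolQ]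
    refine ⟨-(w 21) / 840, ?_⟩
    have h840' : (840 : ℚ) • v = (-(w 21)) • (a - b) := by
      rw [h840, neg_smul, ← smul_neg, neg_sub]
    have hscal : (840 : ℚ)⁻¹ * (-(w 21)) = -(w 21) / 840 := by ring
    calc v = (840 : ℚ)⁻¹ • ((840 : ℚ) • v) := by rw [smul_smul]; norm_num
    _ = (840 : ℚ)⁻¹ • ((-(w 21)) • (a - b)) := by rw [h840']
    _ = (-(w 21) / 840) • (a - b) := by rw [smul_smul, hscal]
  · rintro ⟨c, rfl⟩
    rw [Matrix.mulVec_smul, hNab, smul_zero]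

end rat


section real

abbrev fR : ℤ →+* ℝ := Int.castRingHom ℝ

lemma entry (x : ℤ) :
    (if x = 0 then (1:ℝ) else (Real.sqrt |((x : ℝ))|)⁻¹) * (x : ℝ) *
      (if x = 0 then (1:ℝ) else (Real.sqrt |((x : ℝ))|)⁻¹) =
    if 0 < x then 1 else if x = 0 then 0 else -1 := by
  rcases lt_trichotomy x 0 with h | h | h
  · have hx : (x : ℝ) < 0 := by exact_mod_cast h
    rw [if_neg h.ne, if_neg (by omega : ¬ (0 < x)), if_neg h.ne]
    rw [abs_of_neg hx]
    have h1 : Real.sqrt (-(x:ℝ)) * Real.sqrt (-(x:ℝ)) = -(x:ℝ) := Real.mul_self_sqrt (by linarith)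
    have h2 : Real.sqrt (-(x:ℝ)) ≠ 0 := Real.sqrt_ne_zero'.mpr (by linarith)
    field_simp <;> nlinarith [h1]
  · subst h; norm_num
  · have hx : (0:ℝ) < (x : ℝ) := by exact_mod_cast h
    rw [if_neg h.ne', if_pos h, abs_of_pos hx]
    have h1 : Real.sqrt ((x:ℝ)) * Real.sqrt ((x:ℝ)) = (x:ℝ) := Real.mul_self_sqrt hx.le
    have h2 : Real.sqrt ((x:ℝ)) ≠ 0 := Real.sqrt_ne_zero'.mpr hx
    field_simp <;> nlinarith [h1]

lemma he_ne : ∀ i, e i ≠ 0 := by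
  intro i
  by_cases h : d i = 0
  · simp [e, h]
  · have hpos : (0:ℝ) < |((d i : ℝ))| := abs_pos.mpr (Int.cast_ne_zero.mpr h)
    simp only [e, if_neg h]
    exact inv_ne_zero (Real.sqrt_ne_zero'.mpr hpos)

lemma hcongR : (Q.map ⇑fR).transpose * N ℝ * (Q.map ⇑fR) =
    Matrix.diagonal (fun i => ((d i : ℝ))) := by
  have h1 : Q.transpose * N ℤ * Q = Matrix.diagonal d := by rw [hM1, hcongZ]
  have h := congrArg (fun M : Matrix (Fin 22) (Fin 22) ℤ => M.map ⇑fR) h1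
  rw [Matrix.map_mul, Matrix.map_mul, Matrix.transpose_map, Matrix.diagonal_map (by simp),
    N_map ℝ] at h
  simpa using h

lemma part2 : ∃ P : Matrix (Fin 22) (Fin 22) ℝ, IsUnit P.det ∧
    P.transpose * N ℝ * P =
      Matrix.diagonal (fun i => if i = 0 then (1 : ℝ) else if i = 21 then 0 else -1) := by
  refine ⟨Q.map ⇑fR * Matrix.diagonal e, ?_, ?_⟩
  · have hQRR : (Q.map ⇑fR) * (Rm.map ⇑fR) = (840 : ℝ) • 1 := by
      have h := congrArg (fun M : Matrix (Fin 22) (Fin 22) ℤ => M.map ⇑fR) hQR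
      rw [Matrix.map_mul, Matrix.diagonal_map (by simp)] at h
      rw [h]
      simpa using hd840 (840 : ℝ)
    have h1 : (Q.map ⇑fR) * ((840:ℝ)⁻¹ • Rm.map ⇑fR) = 1 := by
      rw [Matrix.mul_smul, hQRR, smul_smul]
      norm_num
    have h2 : Matrix.diagonal e * Matrix.diagonal (fun i => (e i)⁻¹) = 1 := by
      rw [Matrix.diagonal_mul_diagonal]
      have he : (fun i => e i * (e i)⁻¹) = fun _ : Fin 22 => (1:ℝ) :=
        funext fun i => mul_inv_cancel₀ (he_ne i)
      rw [he, Matrix.diagonal_one]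
    have u1 : IsUnit (Q.map ⇑fR) := by
      have := invertibleOfRightInverse _ _ h1
      exact isUnit_of_invertible _
    have u2 : IsUnit (Matrix.diagonal e) := by
      have := invertibleOfRightInverse _ _ h2
      exact isUnit_of_invertible _
    exact (Matrix.isUnit_iff_isUnit_det _).mp (u1.mul u2)
  · rw [Matrix.transpose_mul, Matrix.diagonal_transpose]
    calc Matrix.diagonal e * (Q.map ⇑fR).transpose * N ℝ *
          (Q.map ⇑fR * Matrix.diagonal e)
        = Matrix.diagonal e * ((Q.map ⇑fR).transpose * N ℝ *
          Q.map ⇑fR) * Matrix.diagonal e := by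
          simp only [Matrix.mul_assoc]
      _ = Matrix.diagonal e * Matrix.diagonal (fun i => ((d i : ℝ))) * Matrix.diagonal e := by
          rw [hcongR]
      _ = Matrix.diagonal (fun i => e i * (d i : ℝ) * e i) := by
          rw [Matrix.diagonal_mul_diagonal, Matrix.diagonal_mul_diagonal]
      _ = Matrix.diagonal (fun i => if i = 0 then (1 : ℝ) else if i = 21 then 0 else -1) := by
          refine congrArg Matrix.diagonal (funext fun i => ?_)
          have hE : e i * (d i : ℝ) * e i =
              if 0 < d i then 1 else if d i = 0 then 0 else -1 := by
            simp only [e]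
            exact entry (d i)
          rw [hE]
          rcases hsign i with ⟨hp, hz⟩
          by_cases h0 : i = 0
          · rw [if_pos (hp.mpr h0), if_pos h0]
          · rw [if_neg (fun h => h0 (hp.mp h)), if_neg h0]
            by_cases h21 : i = 21
            · rw [if_pos (hz.mpr h21), if_pos h21]
            · rw [if_neg (fun h => h21 (hz.mp h)), if_neg h21]

end real

theorem stmt0 :
    (a - b ≠ 0 ∧
      ∀ v : Fin 22 → ℚ, (N ℚ).mulVec v = 0 ↔ ∃ c : ℚ, v = c • (a - b)) ∧
    (∃ P : Matrix (Fin 22) (Fin 22) ℝ, IsUnit P.det ∧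
      P.transpose * N ℝ * P =
        Matrix.diagonal (fun i => if i = 0 then (1 : ℝ) else if i = 21 then 0 else -1)) := by
  refine ⟨⟨?_, part1⟩, part2⟩
  intro h
  have h0 := congrFun h 0
  simp [a, b, Pi.sub_apply] at h0

end Stmt0
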